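/- Let m ≥ 1 and λ ∈ (0, 2). For all u, v ∈ ℝ^m with u ≥ 0 and v ≥ 0, one has g(u,v) = Σ_{i=1}^m (u_i + v_i − 1)^2 + λ·(Σ_{i=1}^m (u_i + v_i) − √(Σ_{i=1}^m (u_i^2 + v_i^2))) ≥ g*(λ), and equality holds if and only if (u_i, v_i) = (c(λ), 0) or (u_i, v_i) = (0, c(λ)) for every i ∈ [m]. In particular, the minimum of g over the nonnegative orthant is g*(λ) and its set of minimizers is Y*. -/
import Mathlib

set_option maxHeartbeats 1600000


/-- For `λ ∈ (0,2)` and `u, v ≥ 0`,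
`g(u,v) = ∑(uᵢ+vᵢ−1)² + λ(∑(uᵢ+vᵢ) − √(∑(uᵢ²+vᵢ²))) ≥ g*(λ)`, with equality iff
`(uᵢ, vᵢ) = (c(λ), 0)` or `(0, c(λ))` for every `i` (so the minimizer set is `Y*`). -/
theorem g_min_over_orthant (m : ℕ) (hm : 1 ≤ m) (lam : ℝ)
    (hlam0 : 0 < lam) (hlam2 : lam < 2)
    (c gstar : ℝ)
    (hc : c = (lam / Real.sqrt m - lam + 2) / 2)
    (hgstar : gstar = lam * ((1 - lam / 4) * m + (lam / 2 - 1) * Real.sqrt m - lam / 4))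
    (g : (Fin m → ℝ) → (Fin m → ℝ) → ℝ)
    (hg : ∀ u v, g u v = (∑ i, (u i + v i - 1) ^ 2)
      + lam * ((∑ i, (u i + v i)) - Real.sqrt (∑ i, (u i ^ 2 + v i ^ 2)))) :
    ∀ u v : Fin m → ℝ, (∀ i, 0 ≤ u i) → (∀ i, 0 ≤ v i) →
      gstar ≤ g u v ∧
      (g u v = gstar ↔ ∀ i, (u i = c ∧ v i = 0) ∨ (u i = 0 ∧ v i = c)) := by
  intro u v hu hv
  set t := Real.sqrt (m : ℝ) with htdef
  have hm1 : (1:ℝ) ≤ (m:ℝ) := by exact_mod_cast hm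
  have ht1 : (1:ℝ) ≤ t := by
    rw [htdef, show (1:ℝ) = Real.sqrt 1 by simp]
    exact Real.sqrt_le_sqrt hm1
  have ht0 : (0:ℝ) < t := lt_of_lt_of_le one_pos ht1
  have hmt : (m:ℝ) = t^2 := (Real.sq_sqrt (by positivity)).symm
  have hc2 : 2 * t * c = lam + (2 - lam) * t := by
    rw [hc]; field_simp; ring
  have hc0 : 0 < c := by
    nlinarith [hc2, mul_pos (show (0:ℝ) < 2 - lam by linarith) ht0]
  have hgs : gstar = (m:ℝ) - (t*c)^2 := by
    rw [hgstar, hmt]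
    linear_combination ((2*t*c + lam + (2-lam)*t)/4) * hc2
  set L := ∑ i, (u i + v i) with hL
  set Q := ∑ i, (u i + v i)^2 with hQ
  set S2 := ∑ i, (u i ^ 2 + v i ^ 2) with hS2
  have hQ0 : 0 ≤ Q := Finset.sum_nonneg fun i _ => sq_nonneg _
  have hS20 : 0 ≤ S2 := Finset.sum_nonneg fun i _ => by positivity
  have hL0 : 0 ≤ L := Finset.sum_nonneg fun i _ => add_nonneg (hu i) (hv i)
  have hSQ : S2 ≤ Q := Finset.sum_le_sum fun i _ => by nlinarith [mul_nonneg (hu i) (hv i)]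
  set r := Real.sqrt Q with hr
  set w := Real.sqrt S2 with hw
  have hr0 : 0 ≤ r := Real.sqrt_nonneg _
  have hw0 : 0 ≤ w := Real.sqrt_nonneg _
  have hrQ : r^2 = Q := Real.sq_sqrt hQ0
  have hwS : w^2 = S2 := Real.sq_sqrt hS20
  have hwr : w ≤ r := Real.sqrt_le_sqrt hSQ
  have hcard : (Finset.univ : Finset (Fin m)).card = m := by simp
  have expand : ∑ i, ((m:ℝ) * (u i + v i) - L)^2
      = (m:ℝ)^2 * Q - (m:ℝ)*L^2 := by
    have h1 : ∀ i : Fin m, ((m:ℝ) * (u i + v i) - L)^2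
        = (m:ℝ)^2 * (u i + v i)^2 - 2*(m:ℝ)*L*(u i + v i) + L^2 := fun i => by ring
    rw [Finset.sum_congr rfl fun i _ => h1 i]
    rw [Finset.sum_add_distrib, Finset.sum_sub_distrib, ← Finset.mul_sum, ← Finset.mul_sum,
      Finset.sum_const, hcard, ← hQ, ← hL]
    ring
  have hCS : L^2 ≤ (m:ℝ) * Q := by
    have key : (0:ℝ) ≤ ∑ i, ((m:ℝ) * (u i + v i) - L)^2 :=
      Finset.sum_nonneg fun i _ => sq_nonneg _
    rw [expand] at key
    have hmpos : (0:ℝ) < m := by linarith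
    have h2 : (m:ℝ) * L^2 ≤ (m:ℝ) * ((m:ℝ) * Q) := by nlinarith [key]
    exact le_of_mul_le_mul_left h2 hmpos
  have hLtr : L ≤ t * r := by
    have h1 : (t*r)^2 = (m:ℝ) * Q := by rw [mul_pow, hrQ, ← hmt]
    have h2 : L^2 ≤ (t*r)^2 := by rw [h1]; exact hCS
    calc L = Real.sqrt (L^2) := (Real.sqrt_sq hL0).symm
      _ ≤ Real.sqrt ((t*r)^2) := Real.sqrt_le_sqrt h2
      _ = t*r := Real.sqrt_sq (mul_nonneg ht0.le hr0)
  have hsum1 : ∑ i, (u i + v i - 1)^2 = Q - 2*L + (m:ℝ) := by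
    have h1 : ∀ i : Fin m, (u i + v i - 1)^2
        = (u i + v i)^2 - 2*(u i + v i) + 1 := fun i => by ring
    rw [Finset.sum_congr rfl fun i _ => h1 i]
    rw [Finset.sum_add_distrib, Finset.sum_sub_distrib, ← Finset.mul_sum,
      Finset.sum_const, hcard, ← hQ, ← hL]
    ring
  have hkey : g u v - gstar
      = lam * (r - w) + (2 - lam) * (t*r - L) + (r - t*c)^2 := by
    rw [hg, hsum1, hgs]
    linear_combination (-1 : ℝ) * hrQ + r * hc2
  have hA : 0 ≤ lam * (r - w) := mul_nonneg hlam0.le (by linarith)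
  have hB : 0 ≤ (2 - lam) * (t*r - L) := mul_nonneg (by linarith) (by linarith)
  have hC : 0 ≤ (r - t*c)^2 := sq_nonneg _
  refine ⟨by linarith, ?_, ?_⟩
  · intro heq
    have hzero : lam * (r - w) + (2 - lam) * (t*r - L) + (r - t*c)^2 = 0 := by
      rw [← hkey, heq]; ring
    have hC0 : (r - t*c)^2 = 0 := le_antisymm (by linarith) hC
    have e3 : r = t*c := by
      have := pow_eq_zero_iff (n := 2) (by norm_num) |>.mp hC0
      linarith
    have e1 : w = r := by
      have hA0 : lam * (r - w) = 0 := le_antisymm (by linarith) hA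
      have := (mul_eq_zero.mp hA0).resolve_left hlam0.ne'
      linarith
    have e2 : L = t*r := by
      have hB0 : (2 - lam) * (t*r - L) = 0 := le_antisymm (by linarith) hB
      have := (mul_eq_zero.mp hB0).resolve_left (by linarith : (2:ℝ) - lam ≠ 0)
      linarith
    have hQval : Q = (m:ℝ) * c^2 := by rw [← hrQ, e3, hmt]; ring
    have hLval : L = (m:ℝ) * c := by rw [e2, e3, hmt]; ring
    have hS2val : S2 = Q := by rw [← hwS, e1, hrQ]
    have hsc : ∀ i : Fin m, u i + v i = c := by
      have hz : ∑ i, (u i + v i - c)^2 = 0 := by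
        have h1 : ∀ i : Fin m, (u i + v i - c)^2
            = (u i + v i)^2 - 2*c*(u i + v i) + c^2 := fun i => by ring
        rw [Finset.sum_congr rfl fun i _ => h1 i]
        rw [Finset.sum_add_distrib, Finset.sum_sub_distrib, ← Finset.mul_sum,
          Finset.sum_const, hcard, ← hQ, ← hL, hQval, hLval]
        ring
      intro i
      have h2 := (Finset.sum_eq_zero_iff_of_nonneg
        (fun i _ => sq_nonneg (u i + v i - c))).mp hz i (Finset.mem_univ i)
      have h3 := pow_eq_zero_iff (n := 2) (by norm_num) |>.mp h2
      linarith
    have huv : ∀ i : Fin m, u i * v i = 0 := by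
      have hz : ∑ i, 2 * (u i * v i) = 0 := by
        have h1 : ∀ i : Fin m, 2 * (u i * v i)
            = (u i + v i)^2 - (u i ^ 2 + v i ^ 2) := fun i => by ring
        rw [Finset.sum_congr rfl fun i _ => h1 i, Finset.sum_sub_distrib,
          ← hQ, ← hS2, hS2val]
        ring
      intro i
      have h2 := (Finset.sum_eq_zero_iff_of_nonneg
        (fun i _ => by have := mul_nonneg (hu i) (hv i); linarith : ∀ i ∈ Finset.univ, (0:ℝ) ≤ 2 * (u i * v i))).mp hz i
        (Finset.mem_univ i)
      linarith
    intro i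
    rcases mul_eq_zero.mp (huv i) with h0 | h0
    · right
      exact ⟨h0, by have := hsc i; linarith⟩
    · left
      exact ⟨by have := hsc i; linarith, h0⟩
  · intro h
    have hsc : ∀ i : Fin m, u i + v i = c := fun i => by
      rcases h i with ⟨h1, h2⟩ | ⟨h1, h2⟩ <;> rw [h1, h2] <;> ring
    have hsq : ∀ i : Fin m, u i ^ 2 + v i ^ 2 = c^2 := fun i => by
      rcases h i with ⟨h1, h2⟩ | ⟨h1, h2⟩ <;> rw [h1, h2] <;> ring
    have hLval : L = (m:ℝ) * c := by
      rw [hL, Finset.sum_congr rfl fun i _ => hsc i, Finset.sum_const, hcard]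
      ring
    have hS2val : S2 = (m:ℝ) * c^2 := by
      rw [hS2, Finset.sum_congr rfl fun i _ => hsq i, Finset.sum_const, hcard]
      ring
    have hwval : w = t * c := by
      rw [hw, hS2val, hmt, show t^2 * c^2 = (t*c)^2 by ring]
      exact Real.sqrt_sq (by positivity)
    have hsum1' : ∑ i, (u i + v i - 1)^2 = (m:ℝ) * (c-1)^2 := by
      rw [Finset.sum_congr rfl fun i _ => by rw [hsc i], Finset.sum_const, hcard]
      ring
    rw [hg, hsum1', ← hL, ← hS2, ← hw, hLval, hwval, hgs, hmt]
    linear_combination (t*c) * hc2
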